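/- For every C₁, C₂ ∈ ℝ, the function u(x) = cos(x - C₂) · √(C₁ - x·tan(x - C₂) - ln(cos(x - C₂))), defined on any open interval where cos(x - C₂) > 0 and the expression under the square root is positive, satisfies the second-order ODE u'' = -x²/(4u³) - u - 1/(2u). -/

import Mathlib

/-- The two-parameter family
`u(x) = cos(x - C₂) · √(C₁ - x·tan(x - C₂) - ln(cos(x - C₂)))`. -/
noncomputable def uEx2 (C₁ C₂ : ℝ) : ℝ → ℝ := fun x =>
  Real.cos (x - C₂) *
    Real.sqrt (C₁ - x * Real.tan (x - C₂) - Real.log (Real.cos (x - C₂)))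

noncomputable def qEx (C₁ C₂ : ℝ) : ℝ → ℝ := fun x =>
  C₁ - x * Real.tan (x - C₂) - Real.log (Real.cos (x - C₂))

lemma hasDerivAt_q (C₁ C₂ x : ℝ) (hc : Real.cos (x - C₂) > 0) :
    HasDerivAt (qEx C₁ C₂) (-x / Real.cos (x - C₂) ^ 2) x := by
  have hcne : Real.cos (x - C₂) ≠ 0 := ne_of_gt hc
  have hsub : HasDerivAt (fun y : ℝ => y - C₂) 1 x := (hasDerivAt_id x).sub_const C₂
  have htan : HasDerivAt (fun y : ℝ => Real.tan (y - C₂)) (1 / Real.cos (x - C₂) ^ 2 * 1) x :=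
    (Real.hasDerivAt_tan hcne).comp (h := fun y : ℝ => y - C₂) x hsub
  have hcosd : HasDerivAt (fun y : ℝ => Real.cos (y - C₂)) (-Real.sin (x - C₂) * 1) x :=
    (Real.hasDerivAt_cos (x - C₂)).comp (h := fun y : ℝ => y - C₂) x hsub
  have hlog : HasDerivAt (fun y : ℝ => Real.log (Real.cos (y - C₂)))
      ((Real.cos (x - C₂))⁻¹ * (-Real.sin (x - C₂) * 1)) x :=
    (Real.hasDerivAt_log hcne).comp (h := fun y : ℝ => Real.cos (y - C₂)) x hcosd
  have hx : HasDerivAt (fun y : ℝ => y * Real.tan (y - C₂))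
      (1 * Real.tan (x - C₂) + x * (1 / Real.cos (x - C₂) ^ 2 * 1)) x :=
    (hasDerivAt_id x).mul htan
  have h := ((hasDerivAt_const x C₁).sub hx).sub hlog
  refine h.congr_deriv (Eq.symm ?_)
  rw [Real.tan_eq_sin_div_cos]
  field_simp
  ring

lemma hasDerivAt_u (C₁ C₂ x : ℝ) (hc : Real.cos (x - C₂) > 0)
    (hq : qEx C₁ C₂ x > 0) :
    HasDerivAt (uEx2 C₁ C₂)
      (-Real.tan (x - C₂) * uEx2 C₁ C₂ x - x / (2 * uEx2 C₁ C₂ x)) x := by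
  have hcne : Real.cos (x - C₂) ≠ 0 := ne_of_gt hc
  have hqne : qEx C₁ C₂ x ≠ 0 := ne_of_gt hq
  have hsqrt : Real.sqrt (qEx C₁ C₂ x) > 0 := Real.sqrt_pos.mpr hq
  have hsne : Real.sqrt (qEx C₁ C₂ x) ≠ 0 := ne_of_gt hsqrt
  have hsub : HasDerivAt (fun y : ℝ => y - C₂) 1 x := (hasDerivAt_id x).sub_const C₂
  have hcosd : HasDerivAt (fun y : ℝ => Real.cos (y - C₂)) (-Real.sin (x - C₂) * 1) x :=
    (Real.hasDerivAt_cos (x - C₂)).comp (h := fun y : ℝ => y - C₂) x hsub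
  have hsq : HasDerivAt (fun y => Real.sqrt (qEx C₁ C₂ y))
      ((-x / Real.cos (x - C₂) ^ 2) / (2 * Real.sqrt (qEx C₁ C₂ x))) x :=
    (hasDerivAt_q C₁ C₂ x hc).sqrt hqne
  have hmul := hcosd.mul hsq
  have hueq : uEx2 C₁ C₂ = fun y => Real.cos (y - C₂) * Real.sqrt (qEx C₁ C₂ y) := rfl
  rw [hueq]
  refine hmul.congr_deriv (Eq.symm ?_)
  simp only [Real.tan_eq_sin_div_cos]
  have h2 : Real.sqrt (qEx C₁ C₂ x) * Real.sqrt (qEx C₁ C₂ x) = qEx C₁ C₂ x :=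
    Real.mul_self_sqrt (le_of_lt hq)
  field_simp
  nlinarith [h2]

lemma u_pos (C₁ C₂ x : ℝ) (hc : Real.cos (x - C₂) > 0) (hq : qEx C₁ C₂ x > 0) :
    uEx2 C₁ C₂ x > 0 :=
  mul_pos hc (Real.sqrt_pos.mpr hq)

lemma hasDerivAt_d (C₁ C₂ x : ℝ) (hc : Real.cos (x - C₂) > 0)
    (hq : qEx C₁ C₂ x > 0) :
    HasDerivAt (fun y => -Real.tan (y - C₂) * uEx2 C₁ C₂ y - y / (2 * uEx2 C₁ C₂ y))
      (-x ^ 2 / (4 * (uEx2 C₁ C₂ x) ^ 3) - uEx2 C₁ C₂ x - 1 / (2 * uEx2 C₁ C₂ x)) x := by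
  have hcne : Real.cos (x - C₂) ≠ 0 := ne_of_gt hc
  have hu := hasDerivAt_u C₁ C₂ x hc hq
  have hune : uEx2 C₁ C₂ x ≠ 0 := ne_of_gt (u_pos C₁ C₂ x hc hq)
  have hsub : HasDerivAt (fun y : ℝ => y - C₂) 1 x := (hasDerivAt_id x).sub_const C₂
  have htan : HasDerivAt (fun y : ℝ => -Real.tan (y - C₂)) (-(1 / Real.cos (x - C₂) ^ 2 * 1)) x :=
    ((Real.hasDerivAt_tan hcne).comp (h := fun y : ℝ => y - C₂) x hsub).neg
  have hp1 := htan.mul hu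
  have hden : HasDerivAt (fun y => 2 * uEx2 C₁ C₂ y)
      (2 * (-Real.tan (x - C₂) * uEx2 C₁ C₂ x - x / (2 * uEx2 C₁ C₂ x))) x := hu.const_mul 2
  have hdne : 2 * uEx2 C₁ C₂ x ≠ 0 := mul_ne_zero two_ne_zero hune
  have hp2 := (hasDerivAt_id x).div hden hdne
  have h := hp1.sub hp2
  refine h.congr_deriv (Eq.symm ?_)
  have hpy := Real.sin_sq_add_cos_sq (x - C₂)
  simp only [Real.tan_eq_sin_div_cos]
  field_simp
  simp only [id_eq]
  linear_combination (-(16:ℝ) * (uEx2 C₁ C₂ x) ^ 4) * hpy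

/-- For every `C₁, C₂ ∈ ℝ`, on any open set where `cos(x - C₂) > 0` and the expression
under the square root is positive, the function
`u(x) = cos(x - C₂)·√(C₁ - x·tan(x - C₂) - ln(cos(x - C₂)))` satisfies the ODE
`u'' = -x²/(4u³) - u - 1/(2u)`. -/
theorem stmt_8 (C₁ C₂ : ℝ) (s : Set ℝ) (hs : IsOpen s)
    (hcos : ∀ x ∈ s, Real.cos (x - C₂) > 0)
    (hpos : ∀ x ∈ s,
      C₁ - x * Real.tan (x - C₂) - Real.log (Real.cos (x - C₂)) > 0) :
    ∀ x ∈ s, deriv (deriv (uEx2 C₁ C₂)) x =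
      -x ^ 2 / (4 * (uEx2 C₁ C₂ x) ^ 3) - uEx2 C₁ C₂ x - 1 / (2 * uEx2 C₁ C₂ x) := by
  intro x hx
  have hev : deriv (uEx2 C₁ C₂) =ᶠ[nhds x]
      fun y => -Real.tan (y - C₂) * uEx2 C₁ C₂ y - y / (2 * uEx2 C₁ C₂ y) := by
    filter_upwards [hs.mem_nhds hx] with y hy
    exact (hasDerivAt_u C₁ C₂ y (hcos y hy) (hpos y hy)).deriv
  rw [hev.deriv_eq, (hasDerivAt_d C₁ C₂ x (hcos x hx) (hpos x hx)).deriv]
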